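/- Let R be a commutative J-clean ring. The following are equivalent: (1) the matrix ring M₂(R) is strongly clean, i.e., every element of M₂(R) is strongly clean; (2) for every a in the Jacobson radical J(R) the polynomial t² − t + a has a root in R, i.e., there exists r ∈ R with r² − r + a = 0. -/

import Mathlib

/-- An element of a ring is *strongly clean* if it is the sum of an idempotent and a unit
that commute with each other. -/
def IsStronglyClean {S : Type*} [Ring S] (a : S) : Prop :=
  ∃ e u : S, IsIdempotentElem e ∧ IsUnit u ∧ a = e + u ∧ e * u = u * e

/-- A commutative ring is *J-clean* if for every `r` there is an idempotent `e` with
`r e + (1 - e)` a unit and `r (1 - e)` in the Jacobson radical. -/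
def IsJCleanRing (R : Type*) [CommRing R] : Prop :=
  ∀ r : R, ∃ e : R, IsIdempotentElem e ∧ IsUnit (r * e + (1 - e)) ∧
    r * (1 - e) ∈ Ideal.jacobson (⊥ : Ideal R)

section Aux
variable {R : Type*} [CommRing R]

local notation "JR" => Ideal.jacobson (⊥ : Ideal R)

private lemma mem_j_unit {a : R} (h : a ∈ JR) : IsUnit (1 + a) := by
  have := Ideal.mem_jacobson_bot.mp h 1
  simpa [add_comm] using this

private lemma isUnit_add_mem_j {u a : R} (hu : IsUnit u) (ha : a ∈ JR) : IsUnit (u + a) := by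
  obtain ⟨v, hv⟩ := hu.exists_right_inv
  have h1 : IsUnit (1 + v * a) := mem_j_unit (Ideal.mul_mem_left _ v ha)
  have : u * (1 + v * a) = u + a := by
    rw [mul_add, mul_one, ← mul_assoc, hv, one_mul]
  rw [← this]
  exact hu.mul h1

/-- `x` is invertible on the idempotent component `f`. -/
private def UOn (f x : R) : Prop := ∃ v, x * v * f = f

private lemma uOn_congr {f x y : R} (h : x * f = y * f) : UOn f x → UOn f y :=
  fun ⟨v, hv⟩ => ⟨v, by linear_combination hv - v * h⟩

private lemma uOn_mul {f x y : R} : UOn f x → UOn f y → UOn f (x * y) :=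
  fun ⟨v, hv⟩ ⟨u, hu⟩ => ⟨v * u, by linear_combination x * v * hu + hv⟩

private lemma uOn_mul_left {f x : R} (g : R) : UOn f x → UOn (g * f) x :=
  fun ⟨v, hv⟩ => ⟨v, by linear_combination g * hv⟩

private lemma uOn_mul_right {f x : R} (g : R) : UOn f x → UOn (f * g) x :=
  fun ⟨v, hv⟩ => ⟨v, by linear_combination g * hv⟩

private lemma uOn_neg_one (f : R) : UOn f (-1) := ⟨-1, by ring⟩

private lemma uOn_isUnit {f x : R} (hf : f * f = f) :
    UOn f x → IsUnit (x * f + (1 - f)) :=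
  fun ⟨v, hv⟩ => IsUnit.of_mul_eq_one (v * f + (1 - f))
    (by linear_combination hv + (x * v - x - v + 1) * hf)

private lemma uOn_of_isUnit {f x : R} (hf : f * f = f) (h : IsUnit (x * f + (1 - f))) :
    UOn f x := by
  obtain ⟨v, hv⟩ := h.exists_right_inv
  exact ⟨v, by linear_combination f * hv + (v - x * v) * hf⟩

private lemma uOn_perturb {f x j : R} (hf : f * f = f) (h : UOn f x) (hj : j * f ∈ JR) :
    UOn f (x + j) := by
  apply uOn_of_isUnit hf
  have h1 := uOn_isUnit hf h
  have heq : (x + j) * f + (1 - f) = (x * f + (1 - f)) + j * f := by ring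
  rw [heq]
  exact isUnit_add_mem_j h1 hj

private lemma uOn_glue4 {f0 f1 f2 f3 x : R} (hs : f0 + f1 + f2 + f3 = 1)
    (h0 : UOn f0 x) (h1 : UOn f1 x) (h2 : UOn f2 x) (h3 : UOn f3 x) : IsUnit x := by
  obtain ⟨v0, hv0⟩ := h0
  obtain ⟨v1, hv1⟩ := h1
  obtain ⟨v2, hv2⟩ := h2
  obtain ⟨v3, hv3⟩ := h3
  exact IsUnit.of_mul_eq_one (v0 * f0 + v1 * f1 + v2 * f2 + v3 * f3)
    (by linear_combination hv0 + hv1 + hv2 + hv3 + hs)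

private lemma eq_of_parts {f0 f1 f2 f3 x y : R} (hs : f0 + f1 + f2 + f3 = 1)
    (h0 : x * f0 = y * f0) (h1 : x * f1 = y * f1)
    (h2 : x * f2 = y * f2) (h3 : x * f3 = y * f3) : x = y := by
  linear_combination h0 + h1 + h2 + h3 - (x - y) * hs

/-- The heart of the converse direction: in a J-clean ring with the root property, for any
`t, d` we can find `al, be` satisfying the equations that make `al • A + be • 1` a strongly
clean decomposition witness for any matrix with trace `t` and determinant `d`. -/
private lemma exists_alpha_beta (hR : IsJCleanRing R)
    (hroot : ∀ a ∈ JR, ∃ r : R, r ^ 2 - r + a = 0) (t d : R) :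
    ∃ al be : R, al * al * t + 2 * al * be = al ∧ be * be - al * al * d = be ∧
      IsUnit ((1 - al) * (1 - al) * d - (1 - al) * be * t + be * be) := by
  obtain ⟨e0, he0', hu0, hj0⟩ := hR d
  have he0 : e0 * e0 = e0 := he0'
  obtain ⟨D, hDd⟩ : ∃ z : R, z = 1 - t + d := ⟨_, rfl⟩
  obtain ⟨e1, he1', hu1, hj1⟩ := hR D
  have he1 : e1 * e1 = e1 := he1'
  obtain ⟨f1, hf1d⟩ : ∃ z : R, z = e1 * (1 - e0) := ⟨_, rfl⟩
  obtain ⟨f2, hf2d⟩ : ∃ z : R, z = (1 - e0) * (1 - e1) := ⟨_, rfl⟩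
  have hf2i : f2 * f2 = f2 := by
    linear_combination (e1 ^ 2 - 2 * e1 + 1) * he0 + (-e0 + 1) * he1 +
      (e0 * e1 - e0 - e1 + f2) * hf2d
  have hdf2 : d * f2 ∈ JR := by
    have h : d * f2 = (d * (1 - e0)) * (1 - e1) := by rw [hf2d]; ring
    rw [h]; exact Ideal.mul_mem_right _ _ hj0
  have hDf2 : D * f2 ∈ JR := by
    have h : D * f2 = (D * (1 - e1)) * (1 - e0) := by rw [hf2d]; ring
    rw [h]; exact Ideal.mul_mem_right _ _ hj1
  have hvu : IsUnit (t * f2 + (1 - f2)) := by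
    have heq : t * f2 + (1 - f2) = 1 + (d * f2 - D * f2) := by rw [hDd]; ring
    rw [heq]; exact mem_j_unit (Ideal.sub_mem _ hdf2 hDf2)
  obtain ⟨v, hv⟩ := uOn_of_isUnit hf2i hvu
  obtain ⟨b, hbd⟩ : ∃ z : R, z = d * v * v * f2 := ⟨_, rfl⟩
  have hbJ : b ∈ JR := by
    rw [hbd]
    have h : d * v * v * f2 = (d * f2) * (v * v) := by ring
    rw [h]; exact Ideal.mul_mem_right _ _ hdf2
  obtain ⟨w, hw⟩ := hroot b hbJ
  obtain ⟨g, hg', hug, hjw⟩ := hR w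
  have hg : g * g = g := hg'
  obtain ⟨f2a, hf2ad⟩ : ∃ z : R, z = f2 * g := ⟨_, rfl⟩
  obtain ⟨f2b, hf2bd⟩ : ∃ z : R, z = f2 * (1 - g) := ⟨_, rfl⟩
  -- layer 1 : idempotent / orthogonality facts
  have i1 : f1 * f1 = f1 := by
    linear_combination (e1 ^ 2) * he0 + (-e0 + 1) * he1 + (-(e0 * e1) + e1 + f1 - 1) * hf1d
  have i2 : f2a * f2a = f2a := by
    linear_combination (e1 ^ 2 * g - 2 * e1 * g + g) * he0 + (-(e0 * g) + g) * he1 +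
      (f2 ^ 2) * hg + (-(e0 * e1 * g) + e0 * g + e1 * g - g + f2a) * hf1d +
      (-(e0 * g) - g * f1 + f2a) * hf2d + (g * f2 - e0 - f1 - f2 + f2a) * hf2ad
  have i3 : f2b * f2b = f2b := by
    linear_combination (-(e1 ^ 2 * g) + e1 ^ 2 + 2 * e1 * g - 2 * e1 - g + 1) * he0 +
      (e0 * g - e0 - g + 1) * he1 + (f2 ^ 2) * hg +
      (e0 * e1 * g - e0 * g - e1 * g + g - f2a) * hf1d +
      (e0 * e1 + e0 * g + g * f1 - e0 - e1 + f2 - f2a) * hf2d +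
      (g * f2 + e0 + f1 + f2b - 1) * hf2ad + (f2 - f2a + f2b - 1) * hf2bd
  have o1 : f1 * e0 = 0 := by linear_combination (-e1) * he0 + (e0) * hf1d
  have o2 : f2a * e0 = 0 := by
    linear_combination (e1 * g - g) * he0 + (e0 * g) * hf2d + (e0) * hf2ad
  have o3 : f2b * e0 = 0 := by
    linear_combination (-(e1 * g) + e1 + g - 1) * he0 +
      (-(e0 * e1) + e0 + e1 + f2a + f2b - 1) * hf1d +
      (-(e0 * e1) - e0 * g + e0 + e1 - f1 - f2 + f2a + f2b) * hf2d +
      (-e0 - f1 - f2 + 1) * hf2ad + (-f1 - f2 + 1) * hf2bd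
  have o4 : f2a * f1 = 0 := by
    linear_combination (-(e1 ^ 2 * g) + e1 * g) * he0 + (e0 * g - g) * he1 +
      (e0 * e1 * g - e0 * g - e1 * g + g) * hf1d + (g * f1) * hf2d + (f1) * hf2ad
  have o5 : f2b * f1 = 0 := by
    linear_combination (e1 ^ 2 * g - e1 ^ 2 - e1 * g + e1) * he0 +
      (-(e0 * g) + e0 + g - 1) * he1 +
      (-(e0 * e1 * g) + e0 * e1 + e0 * g + e1 * g - e0 - e1 - g + 1) * hf1d +
      (-(g * f1) + f1) * hf2d + (f1) * hf2bd
  have o6 : f2a * f2b = 0 := by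
    linear_combination (-(f2 ^ 2)) * hg + (-(g * f2) + f2) * hf2ad + (f2a) * hf2bd
  have s1 : e0 + f1 + f2a + f2b = 1 := by
    linear_combination hf1d + hf2d + hf2ad + hf2bd
  have m1 : f2 * f2a = f2a := by
    linear_combination (e1 ^ 2 * g - 2 * e1 * g + g) * he0 + (-(e0 * g) + g) * he1 +
      (-(e0 * e1 * g) + e0 * g + e1 * g - g + f2a) * hf1d +
      (-(e0 * g) - g * f1 + f2a) * hf2d + (-e0 - f1) * hf2ad
  have m2 : f2 * f2b = f2b := by
    linear_combination (-(e1 ^ 2 * g) + e1 ^ 2 + 2 * e1 * g - 2 * e1 - g + 1) * he0 +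
      (e0 * g - e0 - g + 1) * he1 +
      (e0 * e1 * g - e0 * g - e1 * g + g - f2a) * hf1d +
      (e0 * e1 + e0 * g + g * f1 - e0 - e1 + f2 - f2a) * hf2d +
      (e0 + f1 + f2 - 1) * hf2ad + (f2 - 1) * hf2bd
  -- layer 2
  have htva : t * v * f2a = f2a := by linear_combination (g) * hv + (t * v - 1) * hf2ad
  have htvb : t * v * f2b = f2b := by
    linear_combination (-g + 1) * hv + (t * v - 1) * hf2bd
  have hba : b * f2a = d * v * v * f2a := by
    linear_combination (f2a) * hbd + (d * v ^ 2) * m1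
  have hbb : b * f2b = d * v * v * f2b := by
    linear_combination (f2b) * hbd + (d * v ^ 2) * m2
  have hda : d * f2a = t * t * (w - w * w) * f2a := by
    linear_combination (-(t * d * v) - d) * htva + (-(t ^ 2)) * hba + (t ^ 2 * f2a) * hw
  have hdb : d * f2b = t * t * (w - w * w) * f2b := by
    linear_combination (-(t * d * v) - d) * htvb + (-(t ^ 2)) * hbb + (t ^ 2 * f2b) * hw
  -- basic invertibility-on-components
  have hU0 : UOn e0 d := uOn_of_isUnit he0 hu0
  have hU1 : UOn f1 D := by
    have h := uOn_mul_right (1 - e0) (uOn_of_isUnit he1 hu1)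
    rwa [← hf1d] at h
  have hUt2 : UOn f2 t := ⟨v, hv⟩
  have hUta : UOn f2a t := by
    have h := uOn_mul_right g hUt2; rwa [← hf2ad] at h
  have hUtb : UOn f2b t := by
    have h := uOn_mul_right (1 - g) hUt2; rwa [← hf2bd] at h
  have hUwa : UOn f2a w := by
    have h := uOn_mul_left f2 (uOn_of_isUnit hg hug); rwa [← hf2ad] at h
  obtain ⟨v2, hv2⟩ := hUwa
  have hUwa : UOn f2a w := ⟨v2, hv2⟩
  -- Jacobson radical facts
  have hwJa : (w - 1) * f2a ∈ JR := by
    have key : (w - 1) * f2a = -(b * (v2 * f2a)) := by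
      linear_combination (-w + 1) * hv2 + (v2 * f2a) * hw
    rw [key]; exact neg_mem (Ideal.mul_mem_right _ _ hbJ)
  have hwJb : w * f2b ∈ JR := by
    have key : w * f2b = (w * (1 - g)) * f2 := by rw [hf2bd]; ring
    rw [key]; exact Ideal.mul_mem_right _ _ hjw
  -- the component inverses p2, p3
  have hUp2 : UOn f2a (t * (1 - 2 * w)) := by
    refine uOn_mul hUta ?_
    have h1 : UOn f2a (-1 + (2 - 2 * w)) := by
      refine uOn_perturb i2 (uOn_neg_one f2a) ?_
      have key : (2 - 2 * w) * f2a = (w - 1) * f2a * (-2) := by ring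
      rw [key]; exact Ideal.mul_mem_right _ _ hwJa
    have heq : (-1 : R) + (2 - 2 * w) = 1 - 2 * w := by ring
    rwa [heq] at h1
  obtain ⟨p2, hp2⟩ := hUp2
  have hUp3 : UOn f2b (t * (2 * w - 1)) := by
    refine uOn_mul hUtb ?_
    have h1 : UOn f2b (-1 + 2 * w) := by
      refine uOn_perturb i3 (uOn_neg_one f2b) ?_
      have key : (2 * w) * f2b = (w * f2b) * 2 := by ring
      rw [key]; exact Ideal.mul_mem_right _ _ hwJb
    have heq : (-1 : R) + 2 * w = 2 * w - 1 := by ring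
    rwa [heq] at h1
  obtain ⟨p3, hp3⟩ := hUp3
  -- the glued coefficients
  obtain ⟨al, hal⟩ : ∃ z : R, z = p2 * f2a + p3 * f2b := ⟨_, rfl⟩
  obtain ⟨be, hbe⟩ : ∃ z : R, z = f1 - t * w * p2 * f2a - t * (1 - w) * p3 * f2b := ⟨_, rfl⟩
  -- component facts for al and be
  have hal0 : al * e0 = 0 := by linear_combination (e0) * hal + (p2) * o2 + (p3) * o3
  have hbe0 : be * e0 = 0 := by
    linear_combination (e0) * hbe + o1 + (-(t * w * p2)) * o2 + (t * w * p3 - t * p3) * o3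
  have hal1 : al * f1 = 0 := by linear_combination (f1) * hal + (p2) * o4 + (p3) * o5
  have hbe1 : be * f1 = f1 := by
    linear_combination (f1) * hbe + i1 + (-(t * w * p2)) * o4 + (t * w * p3 - t * p3) * o5
  have hal2a : al * f2a = p2 * f2a := by
    linear_combination (f2a) * hal + (p2) * i2 + (p3) * o6
  have hbe2a : be * f2a = -(t * w * p2 * f2a) := by
    linear_combination (f2a) * hbe + (-(t * w * p2)) * i2 + o4 + (t * w * p3 - t * p3) * o6
  have hal2b : al * f2b = p3 * f2b := by
    linear_combination (f2b) * hal + (p3) * i3 + (p2) * o6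
  have hbe2b : be * f2b = -(t * (1 - w) * p3 * f2b) := by
    linear_combination (f2b) * hbe + (t * w * p3 - t * p3) * i3 + o5 + (-(t * w * p2)) * o6
  refine ⟨al, be, ?_, ?_, ?_⟩
  · -- C1
    refine eq_of_parts s1 ?_ ?_ ?_ ?_
    · linear_combination (t * al + 2 * be - 1) * hal0
    · linear_combination (t * al + 2 * be - 1) * hal1
    · linear_combination (t * p2 + t * al + 2 * be - 1) * hal2a + (2 * p2) * hbe2a +
        (p2) * hp2
    · linear_combination (t * p3 + t * al + 2 * be - 1) * hal2b + (2 * p3) * hbe2b +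
        (p3) * hp3
  · -- C2
    refine eq_of_parts s1 ?_ ?_ ?_ ?_
    · linear_combination (-(d * al)) * hal0 + (be - 1) * hbe0
    · linear_combination (-(d * al)) * hal1 + (be) * hbe1
    · linear_combination (t ^ 2 * w ^ 2 * p2 - t ^ 2 * w * p2 - d * al) * hal2a +
        (-(t * w * p2) + be - 1) * hbe2a + (-(p2 * al)) * hda + (-(t * w * p2)) * hp2
    · linear_combination (t ^ 2 * w ^ 2 * p3 - t ^ 2 * w * p3 - d * al) * hal2b +
        (t * w * p3 - t * p3 + be - 1) * hbe2b + (-(p3 * al)) * hdb +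
        (t * w * p3 - t * p3) * hp3
  · -- C3 : the determinant of the unit part
    refine uOn_glue4 s1 ?_ ?_ ?_ ?_
    · -- on e0 the expression equals d
      refine uOn_congr ?_ hU0
      linear_combination -((d * al + t * be - 2 * d) * hal0) - ((-t + be) * hbe0)
    · -- on f1 the expression equals D
      refine uOn_congr ?_ hU1
      linear_combination -((d * al + t * be - 2 * d) * hal1) - ((-t + be + 1) * hbe1) -
        ((-f1) * hDd)
    · -- on f2a the expression equals (t(1-w)-1)·(tw)
      have hA : UOn f2a (t * (1 - w) - 1) := by
        have h1 : UOn f2a (-1 + t * (1 - w)) := by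
          refine uOn_perturb i2 (uOn_neg_one f2a) ?_
          have key : (t * (1 - w)) * f2a = (w - 1) * f2a * (-t) := by ring
          rw [key]; exact Ideal.mul_mem_right _ _ hwJa
        have heq : (-1 : R) + t * (1 - w) = t * (1 - w) - 1 := by ring
        rwa [heq] at h1
      have hB : UOn f2a (t * w) := uOn_mul hUta hUwa
      refine uOn_congr ?_ (uOn_mul hA hB)
      linear_combination -((-(t ^ 2 * w ^ 2 * p2) + t ^ 2 * w * p2 + d * al + t * be -
        2 * d) * hal2a) - ((-(t * w * p2) + t * p2 - t + be) * hbe2a) -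
        ((p2 * al - 2 * p2 + 1) * hda) - ((-(t * w)) * hp2)
    · -- on f2b the expression equals (tw-1)·(t(1-w))
      have hA : UOn f2b (t * w - 1) := by
        have h1 : UOn f2b (-1 + t * w) := by
          refine uOn_perturb i3 (uOn_neg_one f2b) ?_
          have key : (t * w) * f2b = (w * f2b) * t := by ring
          rw [key]; exact Ideal.mul_mem_right _ _ hwJb
        have heq : (-1 : R) + t * w = t * w - 1 := by ring
        rwa [heq] at h1
      have hB : UOn f2b (t * (1 - w)) := by
        refine uOn_mul hUtb ?_
        have h1 : UOn f2b (1 + -w) := by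
          refine uOn_perturb i3 ⟨1, by ring⟩ ?_
          have key : (-w) * f2b = (w * f2b) * (-1) := by ring
          rw [key]; exact Ideal.mul_mem_right _ _ hwJb
        have heq : (1 : R) + -w = 1 - w := by ring
        rwa [heq] at h1
      refine uOn_congr ?_ (uOn_mul hA hB)
      linear_combination -((-(t ^ 2 * w ^ 2 * p3) + t ^ 2 * w * p3 + d * al + t * be -
        2 * d) * hal2b) - ((t * w * p3 - t + be) * hbe2b) -
        ((p3 * al - 2 * p3 + 1) * hdb) - ((t * w - t) * hp3)

/-- Direction (1) → (2) : root extraction from a strongly clean companion matrix. -/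
private lemma root_of_sc (a : R) (ha : a ∈ JR)
    (h : IsStronglyClean (!![0, -a; 1, 1] : Matrix (Fin 2) (Fin 2) R)) :
    ∃ r : R, r ^ 2 - r + a = 0 := by
  obtain ⟨E, U, hE, hU, hsum, hcomm⟩ := h
  have hE' : E * E = E := hE
  set C : Matrix (Fin 2) (Fin 2) R := !![0, -a; 1, 1] with hCdef
  have hU' : U = C - E := by rw [hsum]; abel
  have hEC : E * C = C * E := by rw [hsum, mul_add, add_mul, hE', hcomm]
  have h01 : E 0 1 = -(a * E 1 0) := by
    have := congr_fun (congr_fun hEC 0) 0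
    simpa [Matrix.mul_apply, Fin.sum_univ_two, hCdef] using this
  have h11 : E 1 1 = E 0 0 + E 1 0 := by
    have := congr_fun (congr_fun hEC 1) 0
    simpa [Matrix.mul_apply, Fin.sum_univ_two, hCdef] using this
  have hx : E 0 0 * E 0 0 + E 0 1 * E 1 0 = E 0 0 := by
    have := congr_fun (congr_fun hE' 0) 0
    simpa [Matrix.mul_apply, Fin.sum_univ_two] using this
  have hdd : E.det * E.det = E.det := by rw [← Matrix.det_mul, hE']
  have M1 : E.det • E = E.det • (1 : Matrix (Fin 2) (Fin 2) R) := by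
    calc E.det • E = (E.det • (1 : Matrix (Fin 2) (Fin 2) R)) * E := by
            rw [smul_mul_assoc, one_mul]
      _ = (E.adjugate * E) * E := by rw [Matrix.adjugate_mul]
      _ = E.adjugate * (E * E) := by rw [mul_assoc]
      _ = E.adjugate * E := by rw [hE']
      _ = E.det • (1 : Matrix (Fin 2) (Fin 2) R) := Matrix.adjugate_mul E
  have M2 : E.det • U = E.det • (C - 1) := by
    rw [hU', smul_sub, smul_sub, M1]
  have hdetU : E.det ^ 2 * U.det = E.det ^ 2 * (C - 1).det := by
    have := congrArg Matrix.det M2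
    rwa [Matrix.det_smul, Matrix.det_smul, Fintype.card_fin] at this
  have hC1det : (C - 1).det = a := by
    simp [hCdef, Matrix.det_fin_two, Matrix.one_apply]
  have hCdet : C.det = a := by simp [hCdef, Matrix.det_fin_two]
  obtain ⟨nu, hnu⟩ := ((Matrix.isUnit_iff_isUnit_det U).mp hU).exists_right_inv
  have hd_mem : E.det ∈ JR := by
    have key : E.det = a * (E.det * nu) := by
      rw [hC1det] at hdetU
      have h2 : E.det ^ 2 = E.det := by rw [sq, hdd]
      rw [h2] at hdetU
      linear_combination nu * hdetU - E.det * hnu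
    rw [key]; exact Ideal.mul_mem_right _ _ ha
  have hd0 : E.det = 0 := by
    have h1u : IsUnit (1 + -E.det) := mem_j_unit (neg_mem hd_mem)
    have hz : (1 + -E.det) * E.det = (1 + -E.det) * 0 := by
      rw [mul_zero]; linear_combination -hdd
    exact h1u.mul_left_cancel hz
  have hE2 : (1 - E) * (1 - E) = 1 - E := (IsIdempotentElem.one_sub hE)
  have hdd2 : (1 - E).det * (1 - E).det = (1 - E).det := by rw [← Matrix.det_mul, hE2]
  have M1' : (1 - E).det • (1 - E) = (1 - E).det • (1 : Matrix (Fin 2) (Fin 2) R) := by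
    calc (1 - E).det • (1 - E)
        = ((1 - E).det • (1 : Matrix (Fin 2) (Fin 2) R)) * (1 - E) := by
            rw [smul_mul_assoc, one_mul]
      _ = ((1 - E).adjugate * (1 - E)) * (1 - E) := by rw [Matrix.adjugate_mul]
      _ = (1 - E).adjugate * ((1 - E) * (1 - E)) := by rw [mul_assoc]
      _ = (1 - E).adjugate * (1 - E) := by rw [hE2]
      _ = (1 - E).det • (1 : Matrix (Fin 2) (Fin 2) R) := Matrix.adjugate_mul _
  have M2' : (1 - E).det • U = (1 - E).det • C := by
    have hEzero : (1 - E).det • E = 0 := by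
      have h' : (1 - E).det • (1 : Matrix (Fin 2) (Fin 2) R) - (1 - E).det • E
          = (1 - E).det • (1 : Matrix (Fin 2) (Fin 2) R) := by
        rw [← smul_sub]; exact M1'
      exact sub_eq_self.mp h'
    rw [hU', smul_sub, hEzero, sub_zero]
  have hdetU' : (1 - E).det ^ 2 * U.det = (1 - E).det ^ 2 * C.det := by
    have := congrArg Matrix.det M2'
    rwa [Matrix.det_smul, Matrix.det_smul, Fintype.card_fin] at this
  have hd_mem' : (1 - E).det ∈ JR := by
    have key : (1 - E).det = a * ((1 - E).det * nu) := by
      rw [hCdet] at hdetU'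
      have h2 : (1 - E).det ^ 2 = (1 - E).det := by rw [sq, hdd2]
      rw [h2] at hdetU'
      linear_combination nu * hdetU' - (1 - E).det * hnu
    rw [key]; exact Ideal.mul_mem_right _ _ ha
  have hd0' : (1 - E).det = 0 := by
    have h1u : IsUnit (1 + -(1 - E).det) := mem_j_unit (neg_mem hd_mem')
    have hz : (1 + -(1 - E).det) * (1 - E).det = (1 + -(1 - E).det) * 0 := by
      rw [mul_zero]; linear_combination -hdd2
    exact h1u.mul_left_cancel hz
  have hdet1 : E 0 0 * E 1 1 - E 0 1 * E 1 0 = 0 := by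
    rw [← Matrix.det_fin_two]; exact hd0
  have hdet2 : (1 - E 0 0) * (1 - E 1 1) - E 0 1 * E 1 0 = 0 := by
    have : (1 - E).det = (1 - E 0 0) * (1 - E 1 1) - (- E 0 1) * (- E 1 0) := by
      rw [Matrix.det_fin_two]
      simp [Matrix.sub_apply, Matrix.one_apply]
    rw [this] at hd0'
    linear_combination hd0'
  set x := E 0 0
  set y := E 1 0
  have hxx : x ^ 2 - a * y ^ 2 = x := by
    rw [h01] at hx; linear_combination hx
  have h2xy : 2 * x + y = 1 := by
    rw [h01, h11] at hdet1 hdet2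
    linear_combination hdet1 - hdet2
  exact ⟨x + y - 2 * a * y,
    by linear_combination (1 - 4 * a) * hxx + (y - a - 3 * a * y + 2 * a * x) * h2xy⟩

end Aux

/-- For a commutative J-clean ring `R`, the matrix ring `M₂(R)` is strongly clean iff for
every `a ∈ J(R)` the polynomial `t² - t + a` has a root in `R`. -/
theorem matrix_two_stronglyClean_iff_of_jClean {R : Type*} [CommRing R]
    (hR : IsJCleanRing R) :
    (∀ A : Matrix (Fin 2) (Fin 2) R, IsStronglyClean A) ↔
      ∀ a ∈ Ideal.jacobson (⊥ : Ideal R), ∃ r : R, r ^ 2 - r + a = 0 := by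
  constructor
  · intro hSC a ha
    exact root_of_sc a ha (hSC _)
  · intro hroot A
    obtain ⟨al, be, hC1, hC2, hC3⟩ := exists_alpha_beta hR hroot
      (A 0 0 + A 1 1) (A 0 0 * A 1 1 - A 0 1 * A 1 0)
    refine ⟨al • A + be • (1 : Matrix (Fin 2) (Fin 2) R),
      A - (al • A + be • (1 : Matrix (Fin 2) (Fin 2) R)), ?_, ?_, by abel, ?_⟩
    · -- idempotent
      show (al • A + be • 1) * (al • A + be • 1) = al • A + be • 1
      ext i j
      fin_cases i <;> fin_cases j <;>
        simp [Matrix.mul_apply, Fin.sum_univ_two, Matrix.add_apply, Matrix.smul_apply,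
          Matrix.one_apply, smul_eq_mul]
      · linear_combination A 0 0 * hC1 + hC2
      · linear_combination A 0 1 * hC1
      · linear_combination A 1 0 * hC1
      · linear_combination A 1 1 * hC1 + hC2
    · -- unit
      rw [Matrix.isUnit_iff_isUnit_det]
      have hdet : (A - (al • A + be • (1 : Matrix (Fin 2) (Fin 2) R))).det =
          (1 - al) * (1 - al) * (A 0 0 * A 1 1 - A 0 1 * A 1 0) -
            (1 - al) * be * (A 0 0 + A 1 1) + be * be := by
        rw [Matrix.det_fin_two]
        simp [Matrix.sub_apply, Matrix.add_apply, Matrix.smul_apply, Matrix.one_apply,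
          smul_eq_mul]
        ring
      rw [hdet]; exact hC3
    · -- commutation
      ext i j
      fin_cases i <;> fin_cases j <;>
        simp [Matrix.mul_apply, Fin.sum_univ_two, Matrix.sub_apply, Matrix.add_apply,
          Matrix.smul_apply, Matrix.one_apply, smul_eq_mul] <;> ring
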